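/- For every ε > 0 and n ∈ ℕ there exists δ > 0 such that: if A is a C*-algebra, p ∈ A is a projection, and w₁,…,wₙ ∈ A satisfy ‖wⱼ* wᵢ − δ_{i,j} p‖ < δ for all 1 ≤ i,j ≤ n (where δ_{i,j} is the Kronecker delta), then there exist partial isometries v₁,…,vₙ ∈ A with vⱼ* vᵢ = δ_{i,j} p for all i,j, and ‖wᵢ − vᵢ‖ < ε for all i. -/

import Mathlib

section helpers
variable {A : Type} [CStarAlgebra A]

lemma glimm_norm_proj_le_one {p : A}
    (hp : IsSelfAdjoint p) (hp2 : IsIdempotentElem p) : ‖p‖ ≤ 1 := by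
  have h : ‖p‖ * ‖p‖ = ‖p‖ := by
    rw [← CStarRing.norm_star_mul_self (x := p), hp.star_eq, hp2.eq]
  nlinarith [norm_nonneg p]

/-- Conjugation by a self-adjoint symmetry, as a star algebra homomorphism. -/
noncomputable def conjSAH (σ : A) (hσ : IsSelfAdjoint σ) (h1 : σ * σ = 1) : A →⋆ₐ[ℂ] A where
  toFun y := σ * y * σ
  map_one' := by simpa using h1
  map_mul' x y := by
    show σ * (x * y) * σ = σ * x * σ * (σ * y * σ)
    have : σ * x * σ * (σ * y * σ) = σ * x * (σ * σ) * y * σ := by noncomm_ring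
    rw [this, h1]; noncomm_ring
  map_zero' := by simp
  map_add' x y := by show σ * (x + y) * σ = _; noncomm_ring
  commutes' r := by
    show σ * algebraMap ℂ A r * σ = _
    simp only [Algebra.algebraMap_eq_smul_one]
    rw [mul_smul_comm, mul_one, smul_mul_assoc, h1]
  map_star' y := by
    show σ * star y * σ = star (σ * y * σ)
    simp [star_mul, hσ.star_eq, mul_assoc]

lemma commute_cfc_of_commute {p b : A} (hb : IsSelfAdjoint b)
    (hcomm : p * b = b * p) (hp : IsSelfAdjoint p) (hp2 : IsIdempotentElem p)
    (f : ℝ → ℝ) (hf : ContinuousOn f (spectrum ℝ b)) :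
    p * cfc f b = cfc f b * p := by
  set σ : A := p + p - 1 with hσdef
  have hσ : IsSelfAdjoint σ := (hp.add hp).sub (IsSelfAdjoint.one A)
  have h1 : σ * σ = 1 := by
    have : (p + p - 1) * (p + p - 1) = (p*p) + (p*p) + (p*p) + (p*p) - p - p - p - p + 1 := by
      noncomm_ring
    rw [hσdef, this, hp2.eq]; abel
  set φ := conjSAH σ hσ h1 with hφdef
  have hφcont : Continuous φ := by
    show Continuous fun y => σ * y * σ
    fun_prop
  have hφb : φ b = b := by
    show σ * b * σ = b
    have hcσ : σ * b = b * σ := by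
      simp only [hσdef, sub_mul, mul_sub, one_mul, mul_one, add_mul, mul_add, hcomm]
    rw [hcσ, mul_assoc, h1, mul_one]
  have key := StarAlgHomClass.map_cfc (S := ℂ) φ f b hf hφcont hb (by rw [hφb]; exact hb)
  rw [hφb] at key
  have hσs : σ * cfc f b = cfc f b * σ := by
    have hkey : σ * cfc f b * σ = cfc f b := key
    calc σ * cfc f b = σ * cfc f b * (σ * σ) := by rw [h1, mul_one]
      _ = (σ * cfc f b * σ) * σ := by noncomm_ring
      _ = cfc f b * σ := by rw [hkey]
  have h2 : p * cfc f b + p * cfc f b = cfc f b * p + cfc f b * p := by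
    have e1 : p * cfc f b + p * cfc f b = σ * cfc f b + cfc f b := by
      rw [hσdef]; noncomm_ring
    have e2 : cfc f b * p + cfc f b * p = cfc f b * σ + cfc f b := by
      rw [hσdef]; noncomm_ring
    rw [e1, e2, hσs]
  have h3 : (2:ℝ) • (p * cfc f b) = (2:ℝ) • (cfc f b * p) := by
    rw [two_smul, two_smul]; exact h2
  exact smul_right_injective A (by norm_num : (2:ℝ) ≠ 0) h3

end helpers

lemma glimm_real_ineq {d x : ℝ} (hd0 : 0 ≤ d) (hd : d ≤ 1/4) (hx : |x - 1| ≤ d) :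
    |1 - (Real.sqrt x)⁻¹| ≤ 2*d ∧ (Real.sqrt x)⁻¹ * (Real.sqrt x)⁻¹ * x = 1 := by
  rw [abs_le] at hx
  have hx0 : (0:ℝ) < x := by linarith
  set t := Real.sqrt x with htdef
  have htt : t * t = x := Real.mul_self_sqrt hx0.le
  have ht0 : 0 < t := Real.sqrt_pos.mpr hx0
  have htub : t ≤ 1 + d := by nlinarith
  have htlb : 1 - d ≤ t := by nlinarith
  have hti : t * t⁻¹ = 1 := mul_inv_cancel₀ ht0.ne'
  have hti0 : 0 < t⁻¹ := inv_pos.mpr ht0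
  constructor
  · rw [abs_le]
    exact ⟨by nlinarith, by nlinarith⟩
  · field_simp
    nlinarith

/-- Single-element version of Glimm's perturbation lemma. -/
lemma glimm_single (ε : ℝ) (hε : 0 < ε) :
    ∃ δ : ℝ, 0 < δ ∧ ∀ (A : Type) [inst : CStarAlgebra A] (p u : A),
      IsSelfAdjoint p → IsIdempotentElem p → ‖star u * u - p‖ < δ →
      ∃ v : A, star v * v = p ∧ ‖u - v‖ < ε ∧ ∀ x : A, x * u = 0 → x * v = 0 := by
  refine ⟨min ((ε/3)^2) (1/4), by positivity, ?_⟩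
  set δ : ℝ := min ((ε/3)^2) (1/4) with hδdef
  have hδpos : 0 < δ := by positivity
  have hδ4 : δ ≤ 1/4 := min_le_right _ _
  have hδε : δ ≤ (ε/3)^2 := min_le_left _ _
  intro A _ p u hp hp2 hu
  rcases subsingleton_or_nontrivial A with hss | hnt
  · exact ⟨u, Subsingleton.elim _ _, by
      rw [Subsingleton.elim (u - u) 0, norm_zero]; exact hε,
      fun x h => Subsingleton.elim _ _⟩
  set h : A := star u * u with hhdef
  have hh : IsSelfAdjoint h := IsSelfAdjoint.star_mul_self u
  set b : A := p * h * p + (1 - p) with hbdef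
  have hbsa : IsSelfAdjoint b := by
    have : IsSelfAdjoint (p * h * p) := by
      rw [IsSelfAdjoint, star_mul, star_mul, hp.star_eq, hh.star_eq, mul_assoc]
      rw [hhdef]; noncomm_ring
    exact this.add ((IsSelfAdjoint.one A).sub hp)
  have hppp : p * p * p = p := by rw [hp2.eq, hp2.eq]
  have hb1 : b - 1 = p * (h - p) * p := by
    have e : p * (h - p) * p = p * h * p - p * p * p := by noncomm_ring
    rw [e, hppp, hbdef]; abel
  have hnormp : ‖p‖ ≤ 1 := glimm_norm_proj_le_one hp hp2
  have hnb1 : ‖b - 1‖ < δ := by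
    rw [hb1]
    have h1 : ‖p * (h - p) * p‖ ≤ ‖p * (h - p)‖ * ‖p‖ := norm_mul_le _ _
    have h2 : ‖p * (h - p)‖ ≤ ‖p‖ * ‖h - p‖ := norm_mul_le _ _
    nlinarith [norm_nonneg (p * (h - p)), norm_nonneg (h - p), norm_nonneg p]
  have hspec : ∀ x ∈ spectrum ℝ b, |x - 1| ≤ δ := by
    intro x hx
    have hmem : x - 1 ∈ spectrum ℝ (b - algebraMap ℝ A 1) := by
      rw [← spectrum.sub_singleton_eq]
      exact Set.sub_mem_sub hx rfl
    rw [map_one] at hmem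
    have := spectrum.norm_le_norm_of_mem hmem
    rw [Real.norm_eq_abs] at this
    exact this.trans hnb1.le
  have hspos : ∀ x ∈ spectrum ℝ b, (3:ℝ)/4 ≤ x := by
    intro x hx
    have := hspec x hx
    rw [abs_le] at this
    linarith
  set g : ℝ → ℝ := fun x => (Real.sqrt x)⁻¹ with hgdef
  have hg : ContinuousOn g (spectrum ℝ b) := by
    apply ContinuousOn.inv₀ (Real.continuous_sqrt.continuousOn)
    intro x hx
    have := hspos x hx
    positivity
  set s : A := cfc g b with hsdef
  have hssa : IsSelfAdjoint s := cfc_predicate g b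
  have hssb : s * s * b = 1 := by
    have e1 : cfc (fun x : ℝ => g x * g x * x) b
        = cfc (fun x : ℝ => g x * g x) b * cfc (fun x : ℝ => x) b :=
      cfc_mul _ _ b (hg.mul hg) continuousOn_id
    have e2 : cfc (fun x : ℝ => g x * g x) b = cfc g b * cfc g b := cfc_mul _ _ b hg hg
    have e3 : cfc (fun x : ℝ => x) b = b := cfc_id' ℝ b
    have e4 : cfc (fun x : ℝ => g x * g x * x) b = cfc (1 : ℝ → ℝ) b := by
      apply cfc_congr
      intro x hx
      exact (glimm_real_ineq hδpos.le hδ4 (hspec x hx)).2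
    rw [e1, e2, e3] at e4
    show cfc g b * cfc g b * b = 1
    exact e4.trans (cfc_one ℝ b)
  have hpb : p * b = b * p := by
    have e1 : p * b = p * p * h * p + (p - p * p) := by rw [hbdef]; noncomm_ring
    have e2 : b * p = p * h * (p * p) + (p - p * p) := by rw [hbdef]; noncomm_ring
    rw [e1, e2, hp2.eq, mul_assoc]
  have hps : p * s = s * p := commute_cfc_of_commute hbsa hpb hp hp2 g hg
  have hsb : s * b = b * s := by
    have := cfc_commute_cfc g (fun x : ℝ => x) b
    rwa [cfc_id' ℝ b] at this
  have hbq : b * (1 - p) = 1 - p := by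
    have e : b * (1 - p) = p * h * p - p * h * (p * p) + (1 - p) * (1 - p) := by
      rw [hbdef]; noncomm_ring
    have e2 : (1 - p) * (1 - p) = 1 - p := by
      have : (1 - p) * (1 - p) = 1 - p - p + p * p := by noncomm_ring
      rw [this, hp2.eq]; abel
    rw [e, hp2.eq, mul_assoc, e2]
    abel
  -- the candidate
  refine ⟨u * (p * s), ?_, ?_, ?_⟩
  · -- star v * v = p
    have hstar : star (u * (p * s)) = s * p * star u := by
      rw [star_mul, star_mul, hssa.star_eq, hp.star_eq]
    have e0 : star (u * (p * s)) * (u * (p * s)) = s * (p * h * p) * s := by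
      rw [hstar, hhdef]
      noncomm_ring
    have e1 : p * h * p = b - (1 - p) := by rw [hbdef]; abel
    have e2 : s * b * s = 1 := by
      rw [mul_assoc, ← hsb, ← mul_assoc, hssb]
    have e3 : s * (1 - p) * s = 1 - p := by
      have hqs : (1 - p) * s = s * (1 - p) := by
        simp only [sub_mul, mul_sub, one_mul, mul_one, hps]
      calc s * (1 - p) * s = s * s * (1 - p) := by rw [mul_assoc, hqs, ← mul_assoc]
        _ = s * s * (b * (1 - p)) := by rw [hbq]
        _ = s * s * b * (1 - p) := by rw [← mul_assoc]
        _ = 1 - p := by rw [hssb, one_mul]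
    rw [e0, e1]
    have : s * (b - (1 - p)) * s = s * b * s - s * (1 - p) * s := by noncomm_ring
    rw [this, e2, e3]
    abel
  · -- norm estimate
    have hsplit : u - u * (p * s) = u * (1 - p) + u * (p * (1 - s)) := by noncomm_ring
    have hn1 : ‖u * (1 - p)‖ ≤ Real.sqrt δ := by
      have hq : IsSelfAdjoint (1 - p) := (IsSelfAdjoint.one A).sub hp
      have hq2 : IsIdempotentElem (1 - p) := hp2.one_sub
      have hnq : ‖(1 - p : A)‖ ≤ 1 := glimm_norm_proj_le_one hq hq2
      have key : (1 - p) * p * (1 - p) = 0 := by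
        have : (1 - p) * p * (1 - p) = (p - p * p) - (p * p - p * p * p) := by noncomm_ring
        rw [this, hppp, hp2.eq]
        abel
      have e : star (u * (1 - p)) * (u * (1 - p)) = (1 - p) * (h - p) * (1 - p) := by
        rw [star_mul, hq.star_eq]
        have e1 : (1 - p) * star u * (u * (1 - p)) = (1 - p) * (star u * u) * (1 - p) := by
          noncomm_ring
        have e2 : (1 - p) * (h - p) * (1 - p)
            = (1 - p) * h * (1 - p) - (1 - p) * p * (1 - p) := by noncomm_ring
        rw [e1, ← hhdef, e2, key, sub_zero]
      have hb2 : ‖u * (1 - p)‖ * ‖u * (1 - p)‖ ≤ δ := by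
        rw [← CStarRing.norm_star_mul_self (x := u * (1 - p)), e]
        have h1 : ‖(1 - p) * (h - p) * (1 - p)‖ ≤ ‖(1 - p) * (h - p)‖ * ‖(1 - p : A)‖ :=
          norm_mul_le _ _
        have h2 : ‖(1 - p) * (h - p)‖ ≤ ‖(1 - p : A)‖ * ‖h - p‖ := norm_mul_le _ _
        nlinarith [norm_nonneg ((1 - p) * (h - p)), norm_nonneg (h - p),
          norm_nonneg ((1 : A) - p)]
      nlinarith [norm_nonneg (u * (1 - p)), Real.sq_sqrt hδpos.le, Real.sqrt_nonneg δ]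
    have hnu : ‖u‖ ≤ 3/2 := by
      have e : ‖u‖ * ‖u‖ = ‖h‖ := by rw [hhdef, CStarRing.norm_star_mul_self]
      have : ‖h‖ ≤ ‖h - p‖ + ‖p‖ := by
        have := norm_add_le (h - p) p
        rwa [sub_add_cancel] at this
      nlinarith [norm_nonneg u]
    have hns : ‖(1 : A) - s‖ ≤ 2 * δ := by
      have e : (1 : A) - s = cfc (fun x : ℝ => 1 - g x) b := by
        rw [cfc_sub (fun _ : ℝ => (1:ℝ)) g b continuousOn_const hg, hsdef]
        congr 1
        exact (cfc_one ℝ b).symm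
      rw [e]
      apply norm_cfc_le (by positivity)
      intro x hx
      rw [Real.norm_eq_abs]
      exact (glimm_real_ineq hδpos.le hδ4 (hspec x hx)).1
    have hn2 : ‖u * (p * (1 - s))‖ ≤ (3/2) * (2 * δ) := by
      have h1 : ‖u * (p * (1 - s))‖ ≤ ‖u‖ * ‖p * (1 - s)‖ := norm_mul_le _ _
      have h2 : ‖p * ((1:A) - s)‖ ≤ ‖p‖ * ‖(1:A) - s‖ := norm_mul_le _ _
      nlinarith [norm_nonneg u, norm_nonneg (p * ((1:A) - s)), norm_nonneg ((1:A) - s),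
        norm_nonneg p, hδpos.le]
    have hsqrtδ : Real.sqrt δ ≤ ε / 3 := by
      have := Real.sqrt_le_sqrt hδε
      rwa [Real.sqrt_sq (by positivity)] at this
    have hsqrt2 : Real.sqrt δ ≤ 1/2 := by
      have := Real.sqrt_le_sqrt hδ4
      rwa [show (1:ℝ)/4 = (1/2)^2 by norm_num, Real.sqrt_sq (by norm_num)] at this
    have hδsq : δ ≤ Real.sqrt δ * Real.sqrt δ := by
      rw [Real.mul_self_sqrt hδpos.le]
    calc ‖u - u * (p * s)‖ = ‖u * (1 - p) + u * (p * (1 - s))‖ := by rw [hsplit]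
      _ ≤ ‖u * (1 - p)‖ + ‖u * (p * (1 - s))‖ := norm_add_le _ _
      _ ≤ Real.sqrt δ + (3/2) * (2 * δ) := add_le_add hn1 hn2
      _ < ε := by nlinarith [Real.sqrt_nonneg δ]
  · intro x hx
    rw [← mul_assoc, hx, zero_mul]

lemma glimm_conj_zero {A : Type} [CStarAlgebra A] {p : A} (hp2 : IsIdempotentElem p) :
    (1 - p) * p * (1 - p) = 0 := by
  have hppp : p * p * p = p := by rw [hp2.eq, hp2.eq]
  have e : (1 - p) * p * (1 - p) = (p - p * p) - (p * p - p * p * p) := by noncomm_ring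
  rw [e, hppp, hp2.eq]
  abel

/-- If `star c * c = p` with `p` a projection, then `c * p = c`. -/
lemma glimm_supp {A : Type} [CStarAlgebra A] {p c : A}
    (hp : IsSelfAdjoint p) (hp2 : IsIdempotentElem p) (hc : star c * c = p) :
    c * p = c := by
  have hq : star ((1:A) - p) = 1 - p := by rw [star_sub, star_one, hp.star_eq]
  have e : star (c * (1 - p)) * (c * (1 - p)) = 0 := by
    rw [star_mul, hq]
    have e1 : (1 - p) * star c * (c * (1 - p)) = (1 - p) * (star c * c) * (1 - p) := by
      noncomm_ring
    rw [e1, hc, glimm_conj_zero hp2]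
  have hz : c * ((1:A) - p) = 0 := by
    have hn := CStarRing.norm_star_mul_self (x := c * ((1:A) - p))
    rw [e, norm_zero] at hn
    have : ‖c * ((1:A) - p)‖ = 0 := by nlinarith [norm_nonneg (c * ((1:A) - p))]
    exact norm_eq_zero.mp this
  have : c * p = c - c * (1 - p) := by noncomm_ring
  rw [this, hz, sub_zero]

set_option maxHeartbeats 2000000 in
theorem glimm_aux (n : ℕ) : ∀ ε : ℝ, 0 < ε →
    ∃ δ : ℝ, 0 < δ ∧
      ∀ (A : Type) [inst : CStarAlgebra A] (p : A) (w : Fin n → A),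
        IsSelfAdjoint p → IsIdempotentElem p →
        (∀ i j : Fin n, ‖star (w j) * w i - (if i = j then p else 0)‖ < δ) →
        ∃ v : Fin n → A,
          (∀ i j : Fin n, star (v j) * v i = if i = j then p else 0) ∧
          ∀ i : Fin n, ‖w i - v i‖ < ε := by
  induction n with
  | zero =>
    intro ε hε
    exact ⟨1, one_pos, fun A _ p w _ _ _ => ⟨w, fun i j => i.elim0, fun i => i.elim0⟩⟩
  | succ n IH =>
    intro ε hε
    obtain ⟨δ₁, hδ₁pos, Hsingle⟩ := glimm_single (ε/2) (by positivity)
    set ε₂ : ℝ := min (min (ε/(8*((n:ℝ)+1))) (δ₁/(40*((n:ℝ)+1)))) (1/(8*((n:ℝ)+1))) with hε₂def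
    have hnn : (0:ℝ) ≤ (n:ℝ) := Nat.cast_nonneg n
    have hε₂pos : 0 < ε₂ := by
      apply lt_min (lt_min (by positivity) (by positivity)) (by positivity)
    have hε₂a : ε₂ ≤ ε/(8*((n:ℝ)+1)) := le_trans (min_le_left _ _) (min_le_left _ _)
    have hε₂b : ε₂ ≤ δ₁/(40*((n:ℝ)+1)) := le_trans (min_le_left _ _) (min_le_right _ _)
    have hε₂c : ε₂ ≤ 1/(8*((n:ℝ)+1)) := min_le_right _ _
    have h8 : (n:ℝ) / ((n:ℝ)+1) ≤ 1 := by
      rw [div_le_one (by positivity)]; linarith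
    have hfrac : (n:ℝ) * ε₂ ≤ min (min (ε/8) (δ₁/40)) (1/8) := by
      refine le_min (le_min ?_ ?_) ?_
      · have h1 := mul_le_mul_of_nonneg_left hε₂a hnn
        calc (n:ℝ) * ε₂ ≤ (n:ℝ) * (ε/(8*((n:ℝ)+1))) := h1
          _ = (n:ℝ) * ε / (8*((n:ℝ)+1)) := (mul_div_assoc _ _ _).symm
          _ ≤ ε/8 := by
              rw [div_le_div_iff₀ (by positivity) (by norm_num)]
              nlinarith [hε.le]
      · have h1 := mul_le_mul_of_nonneg_left hε₂b hnn
        calc (n:ℝ) * ε₂ ≤ (n:ℝ) * (δ₁/(40*((n:ℝ)+1))) := h1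
          _ = (n:ℝ) * δ₁ / (40*((n:ℝ)+1)) := (mul_div_assoc _ _ _).symm
          _ ≤ δ₁/40 := by
              rw [div_le_div_iff₀ (by positivity) (by norm_num)]
              nlinarith [hδ₁pos.le]
      · have h1 := mul_le_mul_of_nonneg_left hε₂c hnn
        calc (n:ℝ) * ε₂ ≤ (n:ℝ) * (1/(8*((n:ℝ)+1))) := h1
          _ = (n:ℝ) * 1 / (8*((n:ℝ)+1)) := (mul_div_assoc _ _ _).symm
          _ ≤ 1/8 := by
              rw [div_le_div_iff₀ (by positivity) (by norm_num)]
              nlinarith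
    have hfa : (n:ℝ) * ε₂ ≤ ε/8 := hfrac.trans (le_trans (min_le_left _ _) (min_le_left _ _))
    have hfb : (n:ℝ) * ε₂ ≤ δ₁/40 := hfrac.trans (le_trans (min_le_left _ _) (min_le_right _ _))
    have hfc : (n:ℝ) * ε₂ ≤ 1/8 := hfrac.trans (min_le_right _ _)
    obtain ⟨δ₀, hδ₀pos, HIH⟩ := IH ε₂ hε₂pos
    refine ⟨min δ₀ ε₂, lt_min hδ₀pos hε₂pos, ?_⟩
    intro A _ p w hp hp2 hw
    set D : ℝ := min δ₀ ε₂ with hDdef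
    have hD0 : D ≤ δ₀ := min_le_left _ _
    have hD1 : D ≤ ε₂ := min_le_right _ _
    have hnormp : ‖p‖ ≤ 1 := glimm_norm_proj_le_one hp hp2
    -- apply the induction hypothesis to the first n elements
    set w' : Fin n → A := fun i => w i.castSucc with hw'def
    have hw' : ∀ i j : Fin n, ‖star (w' j) * w' i - (if i = j then p else 0)‖ < δ₀ := by
      intro i j
      have := hw i.castSucc j.castSucc
      simp only [Fin.castSucc_inj] at this
      exact lt_of_lt_of_le this hD0
    obtain ⟨v', hrel, hclose⟩ := HIH A p w' hp hp2 hw'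
    set W : A := w (Fin.last n) with hWdef
    -- basic norm bounds
    have hWp : ‖star W * W - p‖ < D := by
      have := hw (Fin.last n) (Fin.last n)
      simpa using this
    have hε₂1 : ε₂ ≤ 1 := by
      refine hε₂c.trans ?_
      rw [div_le_one (by positivity)]
      linarith
    have hD1' : D ≤ 1 := hD1.trans hε₂1
    have hWn : ‖W‖ ≤ 3/2 := by
      have e : ‖W‖ * ‖W‖ = ‖star W * W‖ := (CStarRing.norm_star_mul_self (x := W)).symm
      have h2 : ‖star W * W‖ ≤ ‖star W * W - p‖ + ‖p‖ := by
        have := norm_add_le (star W * W - p) p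
        rwa [sub_add_cancel] at this
      nlinarith [norm_nonneg W]
    have hvn : ∀ j : Fin n, ‖v' j‖ ≤ 1 := by
      intro j
      have e : ‖v' j‖ * ‖v' j‖ = ‖star (v' j) * v' j‖ :=
        (CStarRing.norm_star_mul_self (x := v' j)).symm
      rw [hrel j j, if_pos rfl] at e
      nlinarith [norm_nonneg (v' j)]
    have hvp : ∀ j : Fin n, p * star (v' j) = star (v' j) := by
      intro j
      have h1 : v' j * p = v' j := glimm_supp hp hp2 (by rw [hrel j j, if_pos rfl])
      calc p * star (v' j) = star (v' j * p) := by rw [star_mul, hp.star_eq]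
        _ = star (v' j) := by rw [h1]
    -- the corrected element
    set u : A := W - ∑ i : Fin n, v' i * (star (v' i) * W) with hudef
    have horth : ∀ j : Fin n, star (v' j) * u = 0 := by
      intro j
      have e1 : star (v' j) * u
          = star (v' j) * W - ∑ i : Fin n, star (v' j) * (v' i * (star (v' i) * W)) := by
        rw [hudef, mul_sub, Finset.mul_sum]
      have e2 : ∀ i : Fin n, star (v' j) * (v' i * (star (v' i) * W))
          = if i = j then p * (star (v' i) * W) else 0 := by
        intro i
        rw [← mul_assoc, hrel i j]
        split <;> simp
      rw [e1]
      simp only [e2]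
      rw [Finset.sum_ite_eq' Finset.univ j, if_pos (Finset.mem_univ j), ← mul_assoc, hvp j]
      abel
    -- distance from u to W
    have hterm : ∀ i : Fin n, ‖v' i * (star (v' i) * W)‖ ≤ (5/2) * ε₂ := by
      intro i
      have hWi : ‖star (w' i) * W‖ < D := by
        have := hw (Fin.last n) i.castSucc
        rw [if_neg (Fin.castSucc_lt_last i).ne', sub_zero] at this
        exact this
      have hsplit : star (v' i) * W = star (v' i - w' i) * W + star (w' i) * W := by
        rw [← add_mul, ← star_add, sub_add_cancel]
      have hd : ‖star (v' i - w' i) * W‖ ≤ ε₂ * (3/2) := by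
        have h1 : ‖star (v' i - w' i) * W‖ ≤ ‖star (v' i - w' i)‖ * ‖W‖ := norm_mul_le _ _
        rw [norm_star, norm_sub_rev] at h1
        have h2 := (hclose i).le
        nlinarith [norm_nonneg (w' i - v' i), norm_nonneg W, hε₂pos.le]
      have hx : ‖star (v' i) * W‖ ≤ (5/2) * ε₂ := by
        rw [hsplit]
        have h3 := norm_add_le (star (v' i - w' i) * W) (star (w' i) * W)
        have hDe : D ≤ ε₂ := hD1
        linarith only [h3, hd, hWi, hDe]
      have h1 : ‖v' i * (star (v' i) * W)‖ ≤ ‖v' i‖ * ‖star (v' i) * W‖ := norm_mul_le _ _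
      have h2 : ‖v' i‖ * ‖star (v' i) * W‖ ≤ 1 * ‖star (v' i) * W‖ :=
        mul_le_mul_of_nonneg_right (hvn i) (norm_nonneg _)
      linarith only [h1, h2, hx]
    have hR : ‖u - W‖ ≤ (n:ℝ) * ((5/2) * ε₂) := by
      have e : u - W = -∑ i : Fin n, v' i * (star (v' i) * W) := by
        rw [hudef]; abel
      rw [e, norm_neg]
      calc ‖∑ i : Fin n, v' i * (star (v' i) * W)‖
          ≤ ∑ i : Fin n, ‖v' i * (star (v' i) * W)‖ := norm_sum_le _ _
        _ ≤ ∑ _i : Fin n, (5/2) * ε₂ := Finset.sum_le_sum fun i _ => hterm i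
        _ = (n:ℝ) * ((5/2) * ε₂) := by
            rw [Finset.sum_const, Finset.card_univ, Fintype.card_fin, nsmul_eq_mul]
    clear_value u
    clear hudef
    have hRe : (n:ℝ) * ((5/2) * ε₂) = (5/2) * ((n:ℝ) * ε₂) := by ring
    have hR2 : ‖u - W‖ ≤ 5/16 := by
      rw [hRe] at hR
      linarith
    have hun : ‖u‖ ≤ 2 := by
      have : ‖u‖ ≤ ‖u - W‖ + ‖W‖ := by
        have := norm_add_le (u - W) W
        rwa [sub_add_cancel] at this
      linarith
    -- u is an almost-isometry for δ₁
    have hu_bound : ‖star u * u - p‖ < δ₁ := by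
      have hdiff : star u * u - star W * W = star u * (u - W) + star (u - W) * W := by
        rw [star_sub]; noncomm_ring
      have h1 : ‖star u * (u - W)‖ ≤ ‖u‖ * ‖u - W‖ := by
        have := norm_mul_le (star u) (u - W)
        rwa [norm_star] at this
      have h2 : ‖star (u - W) * W‖ ≤ ‖u - W‖ * ‖W‖ := by
        have := norm_mul_le (star (u - W)) W
        rwa [norm_star] at this
      have h3 : ‖star u * u - star W * W‖ ≤ ‖u‖ * ‖u - W‖ + ‖u - W‖ * ‖W‖ := by
        rw [hdiff]
        exact (norm_add_le _ _).trans (add_le_add h1 h2)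
      have h4 : ‖star u * u - p‖ ≤ ‖star u * u - star W * W‖ + ‖star W * W - p‖ := by
        have := norm_add_le (star u * u - star W * W) (star W * W - p)
        have e : star u * u - star W * W + (star W * W - p) = star u * u - p := by abel
        rwa [e] at this
      have hDδ : D ≤ δ₁/40 := by
        refine hD1.trans (hε₂b.trans ?_)
        rw [div_le_div_iff₀ (by positivity) (by norm_num)]
        nlinarith [hδ₁pos.le]
      have m1 : ‖u‖ * ‖u - W‖ ≤ 2 * ‖u - W‖ :=
        mul_le_mul_of_nonneg_right hun (norm_nonneg _)
      have m2 : ‖u - W‖ * ‖W‖ ≤ ‖u - W‖ * (3/2) :=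
        mul_le_mul_of_nonneg_left hWn (norm_nonneg _)
      rw [hRe] at hR
      linarith
    obtain ⟨z, hz1, hz2, hz3⟩ := Hsingle A p u hp hp2 hu_bound
    -- assemble
    refine ⟨Fin.snoc v' z, ?_, ?_⟩
    · intro i j
      refine Fin.lastCases ?_ (fun i' => ?_) i
      · refine Fin.lastCases ?_ (fun j' => ?_) j
        · rw [Fin.snoc_last, if_pos rfl]
          exact hz1
        · rw [Fin.snoc_last, Fin.snoc_castSucc,
            if_neg (Fin.castSucc_lt_last j').ne']
          exact hz3 (star (v' j')) (horth j')
      · refine Fin.lastCases ?_ (fun j' => ?_) j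
        · rw [Fin.snoc_last, Fin.snoc_castSucc, if_neg (Fin.castSucc_lt_last i').ne]
          have := hz3 (star (v' i')) (horth i')
          calc star z * v' i' = star (star (v' i') * z) := by rw [star_mul, star_star]
            _ = 0 := by rw [this, star_zero]
        · simp only [Fin.snoc_castSucc, Fin.castSucc_inj]
          exact hrel i' j'
    · intro i
      refine Fin.lastCases ?_ (fun i' => ?_) i
      · rw [Fin.snoc_last, ← hWdef]
        have : ‖W - z‖ ≤ ‖W - u‖ + ‖u - z‖ := norm_sub_le_norm_sub_add_norm_sub _ _ _
        rw [norm_sub_rev W u] at this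
        nlinarith
      · rw [Fin.snoc_castSucc]
        have := hclose i'
        have hε₂ε : ε₂ ≤ ε/8 := by
          refine hε₂a.trans ?_
          rw [div_le_div_iff₀ (by positivity) (by norm_num)]
          nlinarith [hε.le]
        calc ‖w i'.castSucc - v' i'‖ = ‖w' i' - v' i'‖ := by rw [hw'def]
          _ < ε₂ := this
          _ ≤ ε := by linarith


/-- Glimm's perturbation lemma: almost partial isometries with common support `p`
and almost orthogonal ranges can be perturbed to exact ones. -/
theorem glimm_perturbation (ε : ℝ) (hε : 0 < ε) (n : ℕ) :
    ∃ δ : ℝ, 0 < δ ∧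
      ∀ (A : Type) [inst : CStarAlgebra A] (p : A) (w : Fin n → A),
        IsSelfAdjoint p → IsIdempotentElem p →
        (∀ i j : Fin n, ‖star (w j) * w i - (if i = j then p else 0)‖ < δ) →
        ∃ v : Fin n → A,
          (∀ i j : Fin n, star (v j) * v i = if i = j then p else 0) ∧
          ∀ i : Fin n, ‖w i - v i‖ < ε := by
  exact glimm_aux n ε hε
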